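/- Let G=(V,E) be a connected simple graph not isomorphic to a star, let k be an integer with 1 ≤ k < |V|−1, and let G'=(V',E') = β(G,k). Let S ⊊ V' be such that |S| ≥ |L| + |M| + k. Then a vertex f ∈ M ∩ S is satisfied in G'[S] (i.e., d_S(f)·|V'∖S| ≥ d_{V'∖S}(f)·(|S|−1)) if and only if d_{V'∖S}(f) < |V'∖S|. -/

import Mathlib

open SimpleGraph

/-- Number of neighbors of `v` inside `T`. -/
noncomputable def degIn {W : Type*} (G : SimpleGraph W) (T : Set W) (v : W) : ℕ :=
  (T ∩ G.neighborSet v).ncard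

/-- `G[S]` is a proportionally dense subgraph. -/
def IsPDS {W : Type*} (G : SimpleGraph W) (S : Set W) : Prop :=
  S ⊂ Set.univ ∧ 2 ≤ S.ncard ∧
    ∀ u ∈ S, degIn G Sᶜ u * (S.ncard - 1) ≤ degIn G S u * Sᶜ.ncard

/-- A star is a complete bipartite graph `K_{1,ℓ}`, `ℓ ≥ 1`. -/
def IsStar {V : Type*} (G : SimpleGraph V) : Prop :=
  ∃ ℓ : ℕ, 1 ≤ ℓ ∧ Nonempty (G ≃g completeBipartiteGraph Unit (Fin ℓ))

/-- The number `|L| = |M| ⬝ (|V| - k - 1) - k + 1` of extra vertices in `β(G,k)`. -/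
noncomputable def lsize {V : Type*} [Fintype V] (G : SimpleGraph V) (k : ℕ) : ℕ :=
  G.edgeSet.ncard * (Fintype.card V - k - 1) - k + 1

/-- Vertex type of the bipartite graph `β(G,k)`: `L` (the `Fin` part), `M` (edge
vertices), and `N = V`. -/
abbrev BetaVert (V : Type*) [Fintype V] (G : SimpleGraph V) (k : ℕ) : Type _ :=
  (Fin (lsize G k) ⊕ ↥G.edgeSet) ⊕ V

/-- The bipartite graph `β(G,k)`: every vertex of `M` is adjacent to every vertex
of `L`, and a vertex `e ∈ M` is adjacent to `u ∈ N` iff `u` is not an endpoint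
of the edge `e` of `G`; there are no other edges. -/
def betaGraph {V : Type*} [Fintype V] (G : SimpleGraph V) (k : ℕ) :
    SimpleGraph (BetaVert V G k) where
  Adj x y :=
    match x, y with
    | Sum.inl (Sum.inl _), Sum.inl (Sum.inr _) => True
    | Sum.inl (Sum.inr _), Sum.inl (Sum.inl _) => True
    | Sum.inl (Sum.inr e), Sum.inr u => u ∉ (e : Sym2 V)
    | Sum.inr u, Sum.inl (Sum.inr e) => u ∉ (e : Sym2 V)
    | _, _ => False
  symm := by
    constructor
    rintro ((a | e) | u) ((b | f) | v) h <;> simp_all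
  loopless := by
    constructor
    rintro ((a | e) | u) h <;> simp_all

/-- The set `L ∪ M` in `β(G,k)`. -/
def betaLM {V : Type*} [Fintype V] (G : SimpleGraph V) (k : ℕ) : Set (BetaVert V G k) :=
  Set.range Sum.inl

/-- The set `M` of edge-vertices in `β(G,k)`. -/
def betaM {V : Type*} [Fintype V] (G : SimpleGraph V) (k : ℕ) : Set (BetaVert V G k) :=
  Set.range (fun e : ↥G.edgeSet => Sum.inl (Sum.inr e))


lemma arith_key (L m k s c d dS p : ℕ)
    (hk : 1 ≤ k) (hc : 1 ≤ c) (hd : d ≤ c)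
    (hL : L + k = m * p + 1)
    (hm : k + p ≤ m)
    (hdeg : dS + d + 2 = L + (k + 1 + p))
    (hs : L + m + k ≤ s) (htot : s + c = L + m + (k + 1 + p)) :
    (d * (s - 1) ≤ dS * c ↔ d < c) := by
  obtain ⟨s', rfl⟩ : ∃ s', s = s' + 1 := ⟨s - 1, by omega⟩
  simp only [Nat.add_sub_cancel]
  constructor
  · intro h
    by_contra hlt
    have hdc : d = c := le_antisymm hd (not_lt.1 hlt)
    subst hdc
    have hss : s' ≤ dS := Nat.le_of_mul_le_mul_right (by linarith [h, mul_comm d s', mul_comm dS d]) hc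
    omega
  · intro hlt
    obtain ⟨c', rfl⟩ : ∃ c', c = c' + 1 := ⟨c - 1, by omega⟩
    have hd' : d ≤ c' := by omega
    have hcp : c' ≤ p := by omega
    have h1 : dS + d = (m + 1) * p := by
      have hr : (m + 1) * p = m * p + p := by ring
      omega
    have h2 : s' + c' = dS + d + m := by omega
    have key : d * ((m + 1) * (p + 1)) ≤ ((m + 1) * p) * (c' + 1) := by
      calc d * ((m + 1) * (p + 1)) ≤ c' * ((m + 1) * (p + 1)) :=
            Nat.mul_le_mul_right _ hd'
        _ ≤ ((m + 1) * p) * (c' + 1) := by nlinarith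
    have key' : d * (dS + d + m + 1) ≤ (dS + d) * (c' + 1) := by
      rw [h1]
      have hr : (m + 1) * p + m + 1 = (m + 1) * (p + 1) := by ring
      rw [hr]
      exact key
    have h6 : d * (s' + c') = d * (dS + d + m) := by rw [h2]
    ring_nf at key' h6 ⊢
    linarith [key', h6]

lemma conn_card_le_aux {V : Type*} [Fintype V] (G : SimpleGraph V) (hconn : G.Connected) :
    Fintype.card V ≤ G.edgeSet.ncard + 1 := by
  have hne : Nonempty V := hconn.nonempty
  obtain ⟨v0⟩ := hne
  have hex : ∀ v : V, ∃ u : V, v ≠ v0 → G.Adj v u ∧ G.dist u v0 + 1 = G.dist v v0 := by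
    intro v
    by_cases hv : v = v0
    · exact ⟨v0, fun h => absurd hv h⟩
    · obtain ⟨p, hp⟩ := hconn.exists_walk_length_eq_dist v v0
      have hpos : 0 < G.dist v v0 := hconn.pos_dist_of_ne hv
      cases p with
      | nil => exact absurd rfl hv
      | cons hadj q =>
        rename_i u
        refine ⟨u, fun _ => ⟨hadj, ?_⟩⟩
        have h1 : G.dist u v0 ≤ q.length := SimpleGraph.dist_le q
        have h2 : G.dist v v0 ≤ G.dist v u + G.dist u v0 := hconn.dist_triangle
        have h3 : G.dist v u = 1 := SimpleGraph.dist_eq_one_iff_adj.mpr hadj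
        simp [SimpleGraph.Walk.length_cons] at hp
        omega
  choose u hu using hex
  set f : V → Sym2 V := fun v => s(v, u v) with hf
  have hinj : Set.InjOn f ({v0}ᶜ : Set V) := by
    intro a ha b hb hab
    simp only [Set.mem_compl_iff, Set.mem_singleton_iff] at ha hb
    simp only [hf, Sym2.eq, Sym2.rel_iff', Prod.mk.injEq, Prod.swap_prod_mk] at hab
    rcases hab with ⟨h1, _⟩ | ⟨h1, h2⟩
    · exact h1
    · exfalso
      have ha' := (hu a ha).2
      have hb' := (hu b hb).2
      rw [← h1, ← h2] at hb'
      omega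
  have hsub : f '' ({v0}ᶜ : Set V) ⊆ G.edgeSet := by
    rintro x ⟨a, ha, rfl⟩
    simp only [Set.mem_compl_iff, Set.mem_singleton_iff] at ha
    exact (hu a ha).1
  have h1 : (f '' ({v0}ᶜ : Set V)).ncard = ({v0}ᶜ : Set V).ncard :=
    Set.ncard_image_of_injOn hinj
  have h2 : (f '' ({v0}ᶜ : Set V)).ncard ≤ G.edgeSet.ncard :=
    Set.ncard_le_ncard hsub (Set.toFinite _)
  have h3 : ({v0} : Set V).ncard + ({v0}ᶜ : Set V).ncard = Nat.card V :=
    Set.ncard_add_ncard_compl _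
  have h4 : ({v0} : Set V).ncard = 1 := Set.ncard_singleton v0
  have h5 : Nat.card V = Fintype.card V := Nat.card_eq_fintype_card
  omega

/-- Lemma 5 of the paper: if `|S| ≥ |L| + |M| + k`, a vertex `f ∈ M ∩ S` is
satisfied in `β(G,k)[S]` iff `d_{V'∖S}(f) < |V'∖S|`. -/
theorem beta_M_satisfied_iff {V : Type*} [Fintype V] (G : SimpleGraph V)
    (hconn : G.Connected) (hstar : ¬ IsStar G)
    (k : ℕ) (hk1 : 1 ≤ k) (hk2 : k < Fintype.card V - 1)
    (S : Set (BetaVert V G k)) (hSne : S ⊂ Set.univ)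
    (hcard : lsize G k + G.edgeSet.ncard + k ≤ S.ncard)
    (e : ↥G.edgeSet) (heS : (Sum.inl (Sum.inr e) : BetaVert V G k) ∈ S) :
    (degIn (betaGraph G k) Sᶜ (Sum.inl (Sum.inr e)) * (S.ncard - 1)
        ≤ degIn (betaGraph G k) S (Sum.inl (Sum.inr e)) * Sᶜ.ncard)
      ↔ degIn (betaGraph G k) Sᶜ (Sum.inl (Sum.inr e)) < Sᶜ.ncard := by
  classical
  set L := lsize G k with hLdef
  set m := G.edgeSet.ncard with hmdef
  set n := Fintype.card V with hndef
  set f : BetaVert V G k := Sum.inl (Sum.inr e) with hfdef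
  -- connectivity bound
  have hm : n ≤ m + 1 := conn_card_le_aux G hconn
  -- the edge e is a pair of distinct vertices
  obtain ⟨⟨a, b⟩, hab⟩ := (e : Sym2 V).exists_rep
  have hab' : (e : Sym2 V) = s(a, b) := hab.symm
  have hadj : G.Adj a b := by
    have := e.2
    rw [hab'] at this
    exact this
  have hne : a ≠ b := hadj.ne
  -- the neighborhood of f
  have hN : (betaGraph G k).neighborSet f =
      Set.range (fun a : Fin (lsize G k) => (Sum.inl (Sum.inl a) : BetaVert V G k)) ∪
        Sum.inr '' {u : V | u ∉ (e : Sym2 V)} := by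
    ext x
    rcases x with ((a | g) | u) <;>
      simp [betaGraph, SimpleGraph.neighborSet, hfdef]
  -- its cardinality
  have hT : {u : V | u ∉ (e : Sym2 V)} = ({a, b} : Set V)ᶜ := by
    ext u
    simp [hab', Sym2.mem_iff, Set.mem_compl_iff]
  have hTcard : {u : V | u ∉ (e : Sym2 V)}.ncard = n - 2 := by
    have h1 : ({a, b} : Set V).ncard = 2 := Set.ncard_pair hne
    have h2 : ({a, b} : Set V).ncard + (({a, b} : Set V)ᶜ).ncard = Nat.card V :=
      Set.ncard_add_ncard_compl _
    have h3 : Nat.card V = n := Nat.card_eq_fintype_card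
    rw [hT]
    omega
  have hNcard : ((betaGraph G k).neighborSet f).ncard = L + (n - 2) := by
    rw [hN, Set.ncard_union_eq]
    · congr 1
      · have hinj : Function.Injective
            (fun a : Fin (lsize G k) => (Sum.inl (Sum.inl a) : BetaVert V G k)) := by
          intro x y hxy
          simpa using hxy
        rw [← Nat.card_coe_set_eq, Nat.card_range_of_injective hinj,
          Nat.card_eq_fintype_card, Fintype.card_fin]
      · rw [Set.ncard_image_of_injective _ Sum.inr_injective]
        exact hTcard
    · rw [Set.disjoint_left]
      rintro x ⟨y, rfl⟩ ⟨z, _, h⟩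
      exact absurd h (by simp)
  -- total cardinality
  have hcardV' : Nat.card (BetaVert V G k) = L + m + n := by
    rw [Nat.card_sum, Nat.card_sum, Nat.card_eq_fintype_card (α := Fin (lsize G k)),
      Fintype.card_fin, Nat.card_coe_set_eq, Nat.card_eq_fintype_card (α := V)]
  have htot : S.ncard + Sᶜ.ncard = L + m + n := by
    rw [← hcardV']
    exact Set.ncard_add_ncard_compl S
  -- degree split
  have hsplit : degIn (betaGraph G k) Sᶜ f + degIn (betaGraph G k) S f = L + (n - 2) := by
    rw [← hNcard]
    unfold degIn
    rw [← Set.ncard_union_eq]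
    · congr 1
      rw [← Set.union_inter_distrib_right, Set.compl_union_self, Set.univ_inter]
    · exact Set.disjoint_of_subset Set.inter_subset_left Set.inter_subset_left
        (disjoint_compl_left)
  have hd_le : degIn (betaGraph G k) Sᶜ f ≤ Sᶜ.ncard :=
    Set.ncard_le_ncard Set.inter_subset_left (Set.toFinite _)
  have hc_pos : 1 ≤ Sᶜ.ncard := by
    obtain ⟨x, -, hx⟩ := Set.exists_of_ssubset hSne
    exact (Set.ncard_pos (Set.toFinite _)).mpr ⟨x, hx⟩
  -- the value of L
  have hLk : L + k = m * (n - k - 1) + 1 := by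
    have hm2 : k + 1 ≤ m := by omega
    have hq : k ≤ m * (n - k - 1) := by
      calc k ≤ m := by omega
        _ = m * 1 := (mul_one m).symm
        _ ≤ m * (n - k - 1) := Nat.mul_le_mul_left m (by omega)
    rw [hLdef]
    unfold lsize
    rw [← hmdef, ← hndef]
    set q := m * (n - k - 1)
    omega
  have hp : n = k + 1 + (n - k - 1) := by omega
  have := arith_key L m k S.ncard Sᶜ.ncard (degIn (betaGraph G k) Sᶜ f)
    (degIn (betaGraph G k) S f) (n - k - 1) hk1 hc_pos hd_le hLk (by omega)
    (by omega) hcard (by omega)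
  exact this
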